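/- arXiv:1107.2170 — 2 statements merged into one kernel-verified Lean document; each statement's English description precedes it below -/
import Mathlib

section
/- For every tree T, the minimum skew rank equals twice the matching number: mr^-(T) = 2·match(T), and hence mr^-(T) = MR^-(T). -/
open Matrix SimpleGraph

attribute [local instance] Classical.propDecidable

/-- The set of real skew-symmetric matrices whose off-diagonal zero-nonzero
pattern is described by the graph `G`. -/
def IsSkewRep {V : Type*} [Fintype V] (G : SimpleGraph V) (A : Matrix V V ℝ) : Prop :=
  Aᵀ = -A ∧ ∀ i j, i ≠ j → (A i j ≠ 0 ↔ G.Adj i j)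

/-- The minimum skew rank of a simple graph. -/
noncomputable def minSkewRank {V : Type*} [Fintype V] (G : SimpleGraph V) : ℕ :=
  sInf {r | ∃ A : Matrix V V ℝ, IsSkewRep G A ∧ A.rank = r}

/-- The maximum skew rank of a simple graph. -/
noncomputable def maxSkewRank {V : Type*} [Fintype V] (G : SimpleGraph V) : ℕ :=
  sSup {r | ∃ A : Matrix V V ℝ, IsSkewRep G A ∧ A.rank = r}

/-- The matching number of a simple graph. -/
noncomputable def matchNum {V : Type*} [Fintype V] (G : SimpleGraph V) : ℕ :=
  sSup {n | ∃ M : G.Subgraph, M.IsMatching ∧ M.edgeSet.ncard = n}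


section AuxMatrix

variable {m n : Type*} [Fintype m] [Fintype n] [DecidableEq m] [DecidableEq n]

/-- equiv between submodule prod and prod of submodules -/
def Submodule.prodEquivAux {R M M' : Type*} [Ring R] [AddCommGroup M] [AddCommGroup M']
    [Module R M] [Module R M'] (p : Submodule R M) (q : Submodule R M') :
    (p.prod q) ≃ₗ[R] p × q where
  toFun x := (⟨x.val.1, x.property.1⟩, ⟨x.val.2, x.property.2⟩)
  invFun x := ⟨(x.1.val, x.2.val), ⟨x.1.property, x.2.property⟩⟩
  left_inv x := rfl
  right_inv x := rfl
  map_add' x y := rfl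
  map_smul' c x := rfl

theorem LinearMap.range_prodMap' {R M M' N N' : Type*} [Ring R] [AddCommGroup M] [AddCommGroup M']
    [AddCommGroup N] [AddCommGroup N'] [Module R M] [Module R M'] [Module R N] [Module R N']
    (f : M →ₗ[R] N) (g : M' →ₗ[R] N') :
    LinearMap.range (f.prodMap g) = (LinearMap.range f).prod (LinearMap.range g) := by
  ext ⟨x, y⟩
  constructor
  · rintro ⟨⟨a, b⟩, h⟩
    exact ⟨⟨a, congrArg Prod.fst h⟩, ⟨b, congrArg Prod.snd h⟩⟩
  · rintro ⟨⟨a, ha⟩, ⟨b, hb⟩⟩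
    exact ⟨(a, b), Prod.ext ha hb⟩

theorem rank_fromBlocks_diag (A : Matrix m m ℝ) (D : Matrix n n ℝ) :
    (fromBlocks A 0 0 D).rank = A.rank + D.rank := by
  classical
  let e : ((m ⊕ n) → ℝ) ≃ₗ[ℝ] (m → ℝ) × (n → ℝ) := LinearEquiv.sumArrowLequivProdArrow m n ℝ ℝ
  have key : (fromBlocks A 0 0 D).mulVecLin =
      (e.symm : ((m → ℝ) × (n → ℝ)) →ₗ[ℝ] ((m ⊕ n) → ℝ)).comp
        ((A.mulVecLin.prodMap D.mulVecLin).comp (e : ((m ⊕ n) → ℝ) →ₗ[ℝ] _)) := by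
    ext x i
    cases i <;>
      simp [e, Matrix.mulVecLin, Matrix.fromBlocks_mulVec, Matrix.mulVec, dotProduct,
        LinearEquiv.sumArrowLequivProdArrow, Sum.elim]
  rw [Matrix.rank, key]
  rw [LinearMap.range_comp, LinearMap.range_comp, LinearEquiv.range, Submodule.map_top,
    LinearEquiv.finrank_map_eq, LinearMap.range_prodMap']
  rw [((LinearMap.range A.mulVecLin).prodEquivAux (LinearMap.range D.mulVecLin)).finrank_eq]
  rw [Module.finrank_prod]
  rfl

variable {V : Type*} [Fintype V] [DecidableEq V]

theorem rank_elim_step (A : Matrix V V ℝ) (u v : V) (huv : u ≠ v)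
    (hc : A u v ≠ 0) (hvu : A v u = -A u v) (hvv : A v v = 0)
    (hrow : ∀ j, j ≠ v → A u j = 0) (hcol : ∀ i, i ≠ v → A i u = 0) :
    A.rank = 2 + (A.submatrix (fun w : {x : V // x ≠ u ∧ x ≠ v} => (w : V))
      (fun w : {x : V // x ≠ u ∧ x ≠ v} => (w : V))).rank := by
  set W := {x : V // x ≠ u ∧ x ≠ v} with hW
  let e : (Fin 2 ⊕ W) ≃ V :=
    { toFun := fun i => Sum.elim (![u, v]) (fun w : W => (w : V)) i
      invFun := fun x => if h1 : x = u then Sum.inl 0 else if h2 : x = v then Sum.inl 1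
        else Sum.inr ⟨x, h1, h2⟩
      left_inv := by
        rintro (i | w)
        · fin_cases i
          · simp
          · simp [huv.symm, huv]
        · obtain ⟨x, hx1, hx2⟩ := w
          simp [hx1, hx2]
      right_inv := by
        intro x
        by_cases h1 : x = u
        · simp [h1]
        · by_cases h2 : x = v
          · simp [h1, h2, huv.symm]
          · simp [h1, h2] }
  have hrank : A.rank = (A.submatrix e e).rank := (rank_submatrix A e e).symm
  set c := A u v with hcdef
  set B : Matrix (Fin 2) W ℝ := Matrix.of (fun i (w : W) => A (![u, v] i) (w : V)) with hB
  set C : Matrix W (Fin 2) ℝ := Matrix.of (fun (w : W) i => A (w : V) (![u, v] i)) with hC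
  set D : Matrix W W ℝ := A.submatrix (fun w : W => (w : V)) (fun w : W => (w : V)) with hD
  have hblocks : A.submatrix e e = fromBlocks !![0, c; -c, 0] B C D := by
    ext i j
    rcases i with i | w <;> rcases j with j | w'
    · fin_cases i <;> fin_cases j <;>
        simp [e, hcol u huv, hvu, hvv, Matrix.fromBlocks, hcdef]
    · fin_cases i <;> simp [e, hB, Matrix.fromBlocks]
    · fin_cases j <;> simp [e, hC, Matrix.fromBlocks]
    · simp [e, hD, Matrix.fromBlocks]
  have hdet : IsUnit (!![0, c; -c, 0] : Matrix (Fin 2) (Fin 2) ℝ).det := by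
    rw [Matrix.det_fin_two_of]
    have : (0 : ℝ) * 0 - c * -c = c * c := by ring
    rw [this]
    exact (mul_self_ne_zero.2 hc).isUnit
  have : Invertible (!![0, c; -c, 0] : Matrix (Fin 2) (Fin 2) ℝ) :=
    (!![0, c; -c, 0]).invertibleOfIsUnitDet hdet
  have hinv11 : (⅟(!![0, c; -c, 0] : Matrix (Fin 2) (Fin 2) ℝ)) 1 1 = 0 := by
    rw [invOf_eq_nonsing_inv, Matrix.inv_def, Matrix.adjugate_fin_two_of]
    simp
  have hCB : C * ⅟(!![0, c; -c, 0] : Matrix (Fin 2) (Fin 2) ℝ) * B = 0 := by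
    ext w w'
    have hB0 : B 0 w' = 0 := hrow _ w'.2.2
    have hC0 : C w 0 = 0 := hcol _ w.2.2
    simp only [Matrix.mul_apply, Fin.sum_univ_two, Matrix.zero_apply]
    rw [hB0, hC0]
    rw [hinv11]
    ring
  have hdecomp := fromBlocks_eq_of_invertible₁₁ (!![0, c; -c, 0]) B C D
  rw [hCB, sub_zero] at hdecomp
  rw [hrank, hblocks, hdecomp]
  rw [rank_mul_eq_left_of_isUnit_det _ _ (by
    rw [det_fromBlocks_zero₂₁]; simp)]
  rw [rank_mul_eq_right_of_isUnit_det _ _ (by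
    rw [det_fromBlocks_zero₁₂]; simp)]
  rw [rank_fromBlocks_diag]
  rw [rank_of_isUnit _ (Matrix.isUnit_iff_isUnit_det _ |>.2 hdet)]
  simp [hD]

end AuxMatrix


theorem exists_leaf {V : Type*} [Fintype V] {G : SimpleGraph V} (hG : G.IsAcyclic)
    {x y : V} (hxy : G.Adj x y) :
    ∃ u v, G.Adj u v ∧ ∀ w, G.Adj u w → w = v := by
  classical
  set S : Set ℕ := {n | ∃ (a b : V) (p : G.Walk a b), p.IsPath ∧ p.length = n} with hS
  have hbdd : BddAbove S := by
    refine ⟨Fintype.card V, ?_⟩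
    rintro n ⟨a, b, p, hp, rfl⟩
    exact le_of_lt hp.length_lt
  have h1S : 1 ∈ S := by
    refine ⟨x, y, Walk.cons hxy Walk.nil, ?_, rfl⟩
    simp [Walk.cons_isPath_iff, hxy.ne]
  have hne : S.Nonempty := ⟨1, h1S⟩
  obtain ⟨a, b, p, hp, hlen⟩ := Nat.sSup_mem hne hbdd
  have hlen1 : 1 ≤ sSup S := le_csSup hbdd h1S
  -- consider the reversed path, starting at b
  obtain ⟨q, hq, hqlen⟩ : ∃ q : G.Walk b a, q.IsPath ∧ q.length = sSup S :=
    ⟨p.reverse, hp.reverse, by rw [Walk.length_reverse, hlen]⟩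
  cases q with
  | nil => rw [Walk.length_nil] at hqlen; omega
  | @cons _ c _ h q' =>
    refine ⟨b, c, h, fun w hw => ?_⟩
    by_contra hwc
    rw [Walk.cons_isPath_iff] at hq
    obtain ⟨hq', hbq'⟩ := hq
    by_cases hws : w ∈ (Walk.cons h q').support
    · -- w in support: two distinct paths from b to w, contradiction
      rw [Walk.support_cons, List.mem_cons] at hws
      rcases hws with rfl | hws
      · exact hw.ne rfl
      · have hr : (q'.takeUntil w hws).IsPath := hq'.takeUntil hws
        have hbr : b ∉ (q'.takeUntil w hws).support :=
          fun hmem => hbq' (Walk.support_takeUntil_subset _ hws hmem)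
        have hP2 : (Walk.cons h (q'.takeUntil w hws)).IsPath :=
          (Walk.cons_isPath_iff _ _).2 ⟨hr, hbr⟩
        have hP1 : (Walk.cons hw Walk.nil).IsPath := by
          simp [Walk.cons_isPath_iff, hw.ne]
        have := isAcyclic_iff_path_unique.1 hG ⟨Walk.cons hw Walk.nil, hP1⟩
          ⟨Walk.cons h (q'.takeUntil w hws), hP2⟩
        have hlens := congrArg (fun P : G.Path b w => P.val.length) this
        simp only [Walk.length_cons, Walk.length_nil] at hlens
        have : (q'.takeUntil w hws).length = 0 := by omega
        have := Walk.eq_of_length_eq_zero this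
        exact hwc this.symm
    · -- w not in support: extend the path, contradicting maximality
      have hext : (Walk.cons hw.symm (Walk.cons h q')).IsPath := by
        rw [Walk.cons_isPath_iff]
        refine ⟨(Walk.cons_isPath_iff _ _).2 ⟨hq', hbq'⟩, hws⟩
      have : (Walk.cons hw.symm (Walk.cons h q')).length ∈ S :=
        ⟨_, _, _, hext, rfl⟩
      have hle := le_csSup hbdd this
      rw [Walk.length_cons] at hle
      rw [hqlen] at hle
      omega


section AuxMatch

variable {V : Type*} [Fintype V]

theorem Subgraph.edgeSet_map' {W : Type*} {G : SimpleGraph V} {G' : SimpleGraph W}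
    (f : G →g G') (M : G.Subgraph) :
    (M.map f).edgeSet = Sym2.map f '' M.edgeSet := by
  ext e
  induction e with
  | _ a b =>
    simp only [Subgraph.mem_edgeSet, Subgraph.map_adj, Relation.Map, Set.mem_image]
    constructor
    · rintro ⟨p, q, h, rfl, rfl⟩
      exact ⟨s(p, q), Subgraph.mem_edgeSet.2 h, by simp⟩
    · rintro ⟨e', he', hme⟩
      induction e' with
      | _ p q =>
        rw [Sym2.map_pair_eq, Sym2.eq_iff] at hme
        rcases hme with ⟨rfl, rfl⟩ | ⟨rfl, rfl⟩
        · exact ⟨p, q, Subgraph.mem_edgeSet.1 he', rfl, rfl⟩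
        · exact ⟨q, p, (Subgraph.mem_edgeSet.1 he').symm, rfl, rfl⟩

theorem matchSet_bddAbove (G : SimpleGraph V) :
    BddAbove {n | ∃ M : G.Subgraph, M.IsMatching ∧ M.edgeSet.ncard = n} := by
  refine ⟨G.edgeSet.ncard, ?_⟩
  rintro n ⟨M, _, rfl⟩
  exact Set.ncard_le_ncard M.edgeSet_subset (Set.toFinite _)

theorem matchSet_nonempty (G : SimpleGraph V) :
    (0 : ℕ) ∈ {n | ∃ M : G.Subgraph, M.IsMatching ∧ M.edgeSet.ncard = n} := by
  refine ⟨⊥, ?_, by simp [Subgraph.edgeSet_bot]⟩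
  intro x hx
  simp [Subgraph.verts_bot] at hx

theorem matchNum_exists (G : SimpleGraph V) :
    ∃ M : G.Subgraph, M.IsMatching ∧ M.edgeSet.ncard = matchNum G :=
  Nat.sSup_mem ⟨0, matchSet_nonempty G⟩ (matchSet_bddAbove G)

theorem le_matchNum {G : SimpleGraph V} {M : G.Subgraph} (hM : M.IsMatching) :
    M.edgeSet.ncard ≤ matchNum G :=
  le_csSup (matchSet_bddAbove G) ⟨M, hM, rfl⟩

theorem matchNum_eq_zero {G : SimpleGraph V} (h : ∀ a b, ¬G.Adj a b) : matchNum G = 0 := by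
  have : {n | ∃ M : G.Subgraph, M.IsMatching ∧ M.edgeSet.ncard = n} = {0} := by
    apply Set.eq_singleton_iff_unique_mem.2
    refine ⟨matchSet_nonempty G, ?_⟩
    rintro n ⟨M, _, rfl⟩
    have : M.edgeSet = ∅ := by
      ext e
      induction e with
      | _ a b =>
        simp only [Subgraph.mem_edgeSet, Set.mem_empty_iff_false, iff_false]
        exact fun hadj => h a b (M.adj_sub hadj)
    simp [this]
  rw [matchNum, this, csSup_singleton]

theorem matchNum_step {G : SimpleGraph V} {u v : V} (huv : G.Adj u v)
    (hleaf : ∀ w, G.Adj u w → w = v) :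
    matchNum G = matchNum (G.induce {x | x ≠ u ∧ x ≠ v}) + 1 := by
  classical
  set s : Set V := {x | x ≠ u ∧ x ≠ v} with hs
  have hle1 : matchNum (G.induce s) + 1 ≤ matchNum G := by
    obtain ⟨M', hM', hcard⟩ := matchNum_exists (G.induce s)
    set f := (SimpleGraph.Embedding.induce (G := G) s).toHom with hf
    have hfinj : Function.Injective f := (SimpleGraph.Embedding.induce (G := G) s).injective
    set N := M'.map f with hN
    have hNm : N.IsMatching := hM'.map f hfinj
    have hNcard : N.edgeSet.ncard = matchNum (G.induce s) := by
      rw [hN, Subgraph.edgeSet_map', Set.ncard_image_of_injective _ (Sym2.map.injective hfinj),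
        hcard]
    have hNverts : ∀ x ∈ N.verts, x ≠ u ∧ x ≠ v := by
      rintro x hx
      obtain ⟨y, _, rfl⟩ := hx
      exact y.property
    have hdis : Disjoint N.support (G.subgraphOfAdj huv).support := by
      rw [hNm.support_eq_verts, SimpleGraph.support_subgraphOfAdj]
      rw [Set.disjoint_left]
      intro x hx hx2
      rcases hx2 with rfl | rfl
      · exact (hNverts x hx).1 rfl
      · exact (hNverts x hx).2 rfl
    have hMm : (N ⊔ G.subgraphOfAdj huv).IsMatching :=
      hNm.sup (Subgraph.IsMatching.subgraphOfAdj huv) hdis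
    have hedge : (N ⊔ G.subgraphOfAdj huv).edgeSet = N.edgeSet ∪ {s(u, v)} := by
      rw [Subgraph.edgeSet_sup, SimpleGraph.edgeSet_subgraphOfAdj]
    have hnotmem : s(u, v) ∉ N.edgeSet := by
      intro hmem
      exact (hNverts u (N.edge_vert (Subgraph.mem_edgeSet.1 hmem))).1 rfl
    have hcount : (N ⊔ G.subgraphOfAdj huv).edgeSet.ncard = matchNum (G.induce s) + 1 := by
      rw [hedge, Set.ncard_union_eq (by simpa using hnotmem) (Set.toFinite _) (Set.toFinite _),
        hNcard, Set.ncard_singleton]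
    calc matchNum (G.induce s) + 1 = (N ⊔ G.subgraphOfAdj huv).edgeSet.ncard := hcount.symm
      _ ≤ matchNum G := le_matchNum hMm
  have hle2 : matchNum G ≤ matchNum (G.induce s) + 1 := by
    obtain ⟨M, hM, hcard⟩ := matchNum_exists G
    -- build the restricted matching
    set M' : (G.induce s).Subgraph :=
      { verts := {x : s | (x : V) ∈ M.verts ∧ ¬M.Adj v x}
        Adj := fun a b => M.Adj a b ∧ ¬M.Adj v a ∧ ¬M.Adj v b
        adj_sub := fun h => by
          simp only [comap_adj, Function.Embedding.coe_subtype]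
          exact M.adj_sub h.1
        edge_vert := fun h => ⟨M.edge_vert h.1, h.2.1⟩
        symm := ⟨fun a b h => ⟨M.adj_symm h.1, h.2.2, h.2.1⟩⟩ } with hM'def
    have hM'm : M'.IsMatching := by
      rintro x ⟨hxv, hxa⟩
      obtain ⟨w, hw, hwuniq⟩ := hM hxv
      have hwu : w ≠ u := by
        rintro rfl
        have : (x : V) = v := hleaf _ (G.adj_symm (M.adj_sub hw))
        exact x.property.2 this
      have hwv : w ≠ v := by
        rintro rfl
        exact hxa (M.adj_symm hw)
      have hwa : ¬M.Adj v w := by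
        intro hvw
        obtain ⟨y, hy, hyuniq⟩ := hM (M.edge_vert (M.adj_symm hw))
        have h1 : (x : V) = y := hyuniq _ (M.adj_symm hw)
        have h2 : v = y := hyuniq _ (M.adj_symm hvw)
        exact x.property.2 (h1.trans h2.symm)
      refine ⟨⟨w, hwu, hwv⟩, ⟨hw, hxa, hwa⟩, ?_⟩
      rintro ⟨y, hyu, hyv⟩ ⟨hy, _, _⟩
      exact Subtype.ext (hwuniq y hy)
    have hM'card : M'.edgeSet.ncard ≤ matchNum (G.induce s) := le_matchNum hM'm
    set img := Sym2.map (Subtype.val : s → V) '' M'.edgeSet with himg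
    have himgcard : img.ncard = M'.edgeSet.ncard :=
      Set.ncard_image_of_injective _ (Sym2.map.injective Subtype.val_injective)
    have hgood : ∀ a b : V, M.Adj a b → (a ≠ u ∧ a ≠ v ∧ ¬M.Adj v a) →
        (b ≠ u ∧ b ≠ v ∧ ¬M.Adj v b) → s(a, b) ∈ img := by
      intro a b hab ha hb
      refine ⟨s(⟨a, ha.1, ha.2.1⟩, ⟨b, hb.1, hb.2.1⟩), ?_, by simp⟩
      exact Subgraph.mem_edgeSet.2 ⟨hab, ha.2.2, hb.2.2⟩
    by_cases hvm : v ∈ M.verts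
    · obtain ⟨w₀, hw₀, huniq⟩ := hM hvm
      have key : ∀ a b : V, M.Adj a b → ¬(a ≠ u ∧ a ≠ v ∧ ¬M.Adj v a) → s(a, b) = s(v, w₀) := by
        intro a b hab hbad
        push_neg at hbad
        by_cases hau : a = u
        · subst hau
          have hbv : b = v := hleaf _ (M.adj_sub hab)
          subst hbv
          have : a = w₀ := huniq _ (M.adj_symm hab)
          rw [← this, Sym2.eq_swap]
        · by_cases hav : a = v
          · subst hav
            rw [huniq _ hab]
          · have hva : M.Adj v a := hbad hau hav
            have haw : a = w₀ := huniq _ hva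
            obtain ⟨y, hy, hyuniq⟩ := hM (M.edge_vert hab)
            have h1 : b = y := hyuniq _ hab
            have h2 : v = y := hyuniq _ (M.adj_symm hva)
            rw [h1, ← h2, haw, Sym2.eq_swap]
      have hsub : M.edgeSet ⊆ img ∪ {s(v, w₀)} := by
        intro e he
        induction e with
        | _ a b =>
          have hab := Subgraph.mem_edgeSet.1 he
          by_cases ha : a ≠ u ∧ a ≠ v ∧ ¬M.Adj v a
          · by_cases hb : b ≠ u ∧ b ≠ v ∧ ¬M.Adj v b
            · exact Or.inl (hgood a b hab ha hb)
            · refine Or.inr ?_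
              have := key b a (M.adj_symm hab) hb
              rw [Sym2.eq_swap] at this
              simpa using this
          · exact Or.inr (by simpa using key a b hab ha)
      calc matchNum G = M.edgeSet.ncard := hcard.symm
        _ ≤ (img ∪ {s(v, w₀)}).ncard := Set.ncard_le_ncard hsub (Set.toFinite _)
        _ ≤ img.ncard + 1 := le_trans (Set.ncard_union_le _ _) (by rw [Set.ncard_singleton])
        _ ≤ matchNum (G.induce s) + 1 := by rw [himgcard]; omega
    · have hsub : M.edgeSet ⊆ img := by
        intro e he
        induction e with
        | _ a b =>
          have hab := Subgraph.mem_edgeSet.1 he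
          have hgood' : ∀ c d : V, M.Adj c d → c ≠ u ∧ c ≠ v ∧ ¬M.Adj v c := by
            intro c d hcd
            refine ⟨?_, ?_, ?_⟩
            · rintro rfl
              exact hvm (M.edge_vert (M.adj_symm (hleaf d (M.adj_sub hcd) ▸ hcd)))
            · rintro rfl
              exact hvm (M.edge_vert hcd)
            · intro hvc
              exact hvm (M.edge_vert hvc)
          exact hgood a b hab (hgood' a b hab) (hgood' b a (M.adj_symm hab))
      calc matchNum G = M.edgeSet.ncard := hcard.symm
        _ ≤ img.ncard := Set.ncard_le_ncard hsub (Set.toFinite _)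
        _ ≤ matchNum (G.induce s) + 1 := by rw [himgcard]; omega
  exact le_antisymm hle2 hle1

end AuxMatch

theorem SimpleGraph.IsAcyclic.induce' {V : Type*} {G : SimpleGraph V} (hG : G.IsAcyclic) (s : Set V) :
    (G.induce s).IsAcyclic := by
  rw [isAcyclic_iff_path_unique] at hG ⊢
  intro a b p q
  have hinj : Function.Injective (SimpleGraph.Embedding.induce (G := G) s).toHom :=
    (SimpleGraph.Embedding.induce (G := G) s).injective
  have := hG (p.map _ hinj) (q.map _ hinj)
  exact Path.map_injective hinj a b this

theorem skew_diag_zero {V : Type*} [Fintype V] {G : SimpleGraph V} {A : Matrix V V ℝ}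
    (hA : IsSkewRep G A) (i : V) : A i i = 0 := by
  have := congrFun (congrFun hA.1 i) i
  simp only [Matrix.transpose_apply, Matrix.neg_apply] at this
  linarith

theorem exists_skewRep {V : Type*} [Fintype V] (G : SimpleGraph V) :
    ∃ A : Matrix V V ℝ, IsSkewRep G A := by
  classical
  let L := Fintype.equivFin V
  refine ⟨Matrix.of (fun i j => if G.Adj i j then (if L i < L j then (1 : ℝ) else -1) else 0),
    ?_, ?_⟩
  · ext i j
    simp only [Matrix.transpose_apply, Matrix.neg_apply, Matrix.of_apply]
    by_cases h : G.Adj i j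
    · have h' : G.Adj j i := G.adj_symm h
      have hne : L i ≠ L j := fun hc => h.ne (L.injective hc)
      rcases Fin.lt_or_lt_of_ne hne with hlt | hlt
      · simp [h, h', hlt, hlt.not_gt]
      · simp [h, h', hlt, hlt.not_gt]
    · have h' : ¬G.Adj j i := fun hc => h (G.adj_symm hc)
      simp [h, h']
  · intro i j hij
    by_cases h : G.Adj i j
    · simp only [Matrix.of_apply, h, if_true]
      refine iff_of_true ?_ trivial
      split <;> norm_num
    · simp [h]

theorem rank_skewRep_noedge {V : Type*} [Fintype V] {G : SimpleGraph V}
    (h : ∀ a b, ¬G.Adj a b) {A : Matrix V V ℝ} (hA : IsSkewRep G A) :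
    A.rank = 2 * matchNum G := by
  have hA0 : A = 0 := by
    ext i j
    by_cases hij : i = j
    · subst hij; exact skew_diag_zero hA i
    · by_contra h0
      exact h i j ((hA.2 i j hij).1 h0)
  rw [hA0, Matrix.rank_zero, matchNum_eq_zero h, mul_zero]

theorem rank_skewRep_acyclic : ∀ (n : ℕ) (V : Type u) [Fintype V] (G : SimpleGraph V),
    Fintype.card V ≤ n → G.IsAcyclic →
    ∀ A : Matrix V V ℝ, IsSkewRep G A → A.rank = 2 * matchNum G := by
  intro n
  induction n with
  | zero =>
    intro V _ G hcard _ A hA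
    have : IsEmpty V := by
      rwa [Nat.le_zero, Fintype.card_eq_zero_iff] at hcard
    exact rank_skewRep_noedge (fun a b _ => (IsEmpty.false a).elim) hA
  | succ n IH =>
    intro V _ G hcard hacyc A hA
    by_cases hE : ∃ a b, G.Adj a b
    · obtain ⟨x, y, hxy⟩ := hE
      obtain ⟨u, v, huv, hleaf⟩ := exists_leaf hacyc hxy
      have hrow : ∀ j, j ≠ v → A u j = 0 := by
        intro j hj
        by_cases hju : j = u
        · subst hju; exact skew_diag_zero hA j
        · by_contra h0
          exact hj (hleaf j ((hA.2 u j (Ne.symm hju)).1 h0))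
      have hc : A u v ≠ 0 := (hA.2 u v huv.ne).2 huv
      have hvu : A v u = -A u v := by
        have := congrFun (congrFun hA.1 u) v
        simpa using this
      have hcol : ∀ i, i ≠ v → A i u = 0 := by
        intro i hi
        have h2 := congrFun (congrFun hA.1 u) i
        simp only [Matrix.transpose_apply, Matrix.neg_apply] at h2
        rw [hrow i hi] at h2
        linarith
      have hstep := rank_elim_step A u v huv.ne hc hvu (skew_diag_zero hA v) hrow hcol
      set s : Set V := {x | x ≠ u ∧ x ≠ v} with hs
      set D : Matrix s s ℝ :=
        A.submatrix (fun w : s => (w : V)) (fun w : s => (w : V)) with hD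
      have hDrep : IsSkewRep (G.induce s) D := by
        constructor
        · ext i j
          have := congrFun (congrFun hA.1 (i : V)) (j : V)
          simpa [hD] using this
        · intro i j hij
          have hne : (i : V) ≠ (j : V) := fun hc' => hij (Subtype.ext hc')
          have := hA.2 _ _ hne
          simpa [hD] using this
      have hcardlt : Fintype.card s < Fintype.card V :=
        Fintype.card_subtype_lt (x := u) (by simp [hs])
      have hIH := IH s (G.induce s) (by omega) (hacyc.induce' s) D hDrep
      have hm := matchNum_step huv hleaf
      rw [hstep]
      have : (A.submatrix (fun w : {x : V // x ≠ u ∧ x ≠ v} => (w : V))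
          (fun w : {x : V // x ≠ u ∧ x ≠ v} => (w : V))).rank = D.rank := rfl
      rw [this, hIH, hm]
      ring
    · push_neg at hE
      exact rank_skewRep_noedge hE hA

/-- For a tree `T`, `mr⁻(T) = 2·match(T) = MR⁻(T)`. -/
theorem minSkewRank_tree {V : Type*} [Fintype V] (T : SimpleGraph V) (hT : T.IsTree) :
    minSkewRank T = 2 * matchNum T ∧ minSkewRank T = maxSkewRank T := by
  classical
  have hacyc : T.IsAcyclic := hT.IsAcyclic
  obtain ⟨A₀, hA₀⟩ := exists_skewRep T
  have hall : ∀ r ∈ {r | ∃ A : Matrix V V ℝ, IsSkewRep T A ∧ A.rank = r},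
      r = 2 * matchNum T := by
    rintro r ⟨A, hA, rfl⟩
    exact rank_skewRep_acyclic (Fintype.card V) V T le_rfl hacyc A hA
  have hReq : {r | ∃ A : Matrix V V ℝ, IsSkewRep T A ∧ A.rank = r} = {2 * matchNum T} := by
    apply Set.eq_singleton_iff_unique_mem.2
    refine ⟨⟨A₀, hA₀, rank_skewRep_acyclic (Fintype.card V) V T le_rfl hacyc A₀ hA₀⟩, hall⟩
  constructor
  · rw [minSkewRank, hReq, csInf_singleton]
  · rw [minSkewRank, maxSkewRank, hReq, csInf_singleton, csSup_singleton]
end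

section
/- For any vertex v of a graph G, the skew rank-spread r^-_v(G) = mr^-(G) - mr^-(G - v) is either 0 or 2. -/
open Matrix SimpleGraph

attribute [local instance] Classical.propDecidable

section Aux

set_option linter.unusedSectionVars false

variable {V : Type*} [Fintype V]

lemma dot_sum_right {ι : Type*} (s : Finset ι) (v : V → ℝ) (f : ι → V → ℝ) :
    v ⬝ᵥ (∑ i ∈ s, f i) = ∑ i ∈ s, v ⬝ᵥ f i := by
  simp only [dotProduct, Finset.sum_apply, Finset.mul_sum]
  exact Finset.sum_comm

lemma dot_sum_left {ι : Type*} (s : Finset ι) (v : V → ℝ) (f : ι → V → ℝ) :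
    (∑ i ∈ s, f i) ⬝ᵥ v = ∑ i ∈ s, f i ⬝ᵥ v := by
  simp only [dotProduct, Finset.sum_apply, Finset.sum_mul]
  exact Finset.sum_comm

lemma skew_diag {A : Matrix V V ℝ} (h : Aᵀ = -A) (i : V) : A i i = 0 := by
  have := congrFun (congrFun h i) i
  simp only [transpose_apply, Matrix.neg_apply] at this
  linarith

lemma matrix_rank_add_le (A B : Matrix V V ℝ) : (A + B).rank ≤ A.rank + B.rank := by
  classical
  rw [Matrix.rank, Matrix.rank, Matrix.rank, Matrix.mulVecLin_add]
  have hle : LinearMap.range (A.mulVecLin + B.mulVecLin) ≤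
      LinearMap.range A.mulVecLin ⊔ LinearMap.range B.mulVecLin := by
    rintro x ⟨y, rfl⟩
    exact Submodule.mem_sup.2 ⟨_, ⟨y, rfl⟩, _, ⟨y, rfl⟩, rfl⟩
  exact (Submodule.finrank_mono hle).trans
    (Submodule.finrank_add_le_finrank_add_finrank _ _)

lemma rank_vecMulVec_le (w u : V → ℝ) : (vecMulVec w u).rank ≤ 1 := by
  rw [Matrix.vecMulVec_eq Unit]
  exact (Matrix.rank_mul_le_right _ _).trans
    ((Matrix.rank_le_card_height _).trans_eq (by simp))

lemma skew_rank_even (A : Matrix V V ℝ) (hA : Aᵀ = -A) : Even A.rank := by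
  classical
  have key : ∀ x y : V → ℝ, (A *ᵥ x) ⬝ᵥ y = -(x ⬝ᵥ (A *ᵥ y)) := by
    intro x y
    rw [← Matrix.vecMul_transpose, hA, Matrix.vecMul_neg, neg_dotProduct,
      ← dotProduct_mulVec]
  set W := LinearMap.range A.mulVecLin with hWdef
  have hWmem : ∀ x, A *ᵥ x ∈ W := fun x => ⟨x, rfl⟩
  have hker : ∀ x ∈ W, A *ᵥ x = 0 → x = 0 := by
    rintro x ⟨z, rfl⟩ hx
    rw [Matrix.mulVecLin_apply] at hx ⊢
    have h := key z (A *ᵥ z)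
    rw [hx] at h
    simp only [dotProduct_zero, neg_zero] at h
    exact dotProduct_self_eq_zero.mp h
  set r := A.rank with hr
  have hfr : Module.finrank ℝ W = r := rfl
  let b : Module.Basis (Fin r) ℝ W := Module.finBasisOfFinrankEq ℝ W hfr
  set M : Matrix (Fin r) (Fin r) ℝ := fun s t => (b s : V → ℝ) ⬝ᵥ (A *ᵥ (b t : V → ℝ))
    with hM
  have hMskew : Mᵀ = -M := by
    ext s t
    simp only [transpose_apply, Matrix.neg_apply, hM]
    show (b t : V → ℝ) ⬝ᵥ (A *ᵥ (b s : V → ℝ)) = -((b s : V → ℝ) ⬝ᵥ (A *ᵥ (b t : V → ℝ)))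
    rw [dotProduct_comm]
    exact key _ _
  have hMinj : ∀ c : Fin r → ℝ, M *ᵥ c = 0 → c = 0 := by
    intro c hc
    set x : V → ℝ := ∑ t, c t • (b t : V → ℝ) with hx
    have hAx : A *ᵥ x = ∑ t, c t • (A *ᵥ (b t : V → ℝ)) := by
      rw [hx]
      simp only [← Matrix.mulVecLin_apply, map_sum, LinearMap.map_smul]
    have hdot : ∀ s : Fin r, (b s : V → ℝ) ⬝ᵥ (A *ᵥ x) = 0 := by
      intro s
      have hcs := congrFun hc s
      calc (b s : V → ℝ) ⬝ᵥ (A *ᵥ x) = ∑ t, c t * M s t := by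
            rw [hAx, dot_sum_right]
            refine Finset.sum_congr rfl fun t _ => ?_
            rw [dotProduct_smul]
            rfl
        _ = (M *ᵥ c) s := by
            simp [Matrix.mulVec, dotProduct, mul_comm]
        _ = 0 := by simpa using hcs
    have hu : A *ᵥ x ∈ W := hWmem x
    have hu0 : A *ᵥ x = 0 := by
      have hrepr : (A *ᵥ x) = ∑ s, b.repr ⟨A *ᵥ x, hu⟩ s • (b s : V → ℝ) := by
        have h1 := congrArg (Subtype.val) (b.sum_repr ⟨A *ᵥ x, hu⟩)
        simp only [Submodule.coe_sum, Submodule.coe_smul] at h1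
        exact h1.symm
      have hzero : (A *ᵥ x) ⬝ᵥ (A *ᵥ x) = 0 := by
        nth_rewrite 1 [hrepr]
        rw [dot_sum_left]
        refine Finset.sum_eq_zero fun s _ => ?_
        rw [smul_dotProduct, hdot s, smul_zero]
      exact dotProduct_self_eq_zero.mp hzero
    have hxW : x ∈ W := by
      rw [hx]
      exact Submodule.sum_mem _ fun t _ => Submodule.smul_mem _ _ (b t).2
    have hx0 : x = 0 := hker x hxW hu0
    have hli : LinearIndependent ℝ (fun t => (b t : V → ℝ)) :=
      b.linearIndependent.map' W.subtype (Submodule.ker_subtype W)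
    exact funext fun t => Fintype.linearIndependent_iff.mp hli c (hx ▸ hx0) t
  have hdet : M.det ≠ 0 := by
    intro h
    obtain ⟨c, hc0, hc⟩ := Matrix.exists_mulVec_eq_zero_iff.mpr h
    exact hc0 (hMinj c hc)
  have h1 : (1 : ℝ) * M.det = (-1 : ℝ) ^ r * M.det := by
    rw [one_mul]
    conv_lhs => rw [← Matrix.det_transpose, hMskew, Matrix.det_neg]
    simp
  have h2 : ((-1 : ℝ) ^ r) = 1 := (mul_right_cancel₀ hdet h1).symm
  exact (neg_one_pow_eq_one_iff_even (by norm_num : (-1 : ℝ) ≠ 1)).mp h2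

lemma exists_isSkewRep (G : SimpleGraph V) : ∃ A : Matrix V V ℝ, IsSkewRep G A := by
  classical
  let e := Fintype.equivFin V
  refine ⟨fun i j => if G.Adj i j then (if e i < e j then (1 : ℝ) else -1) else 0, ?_, ?_⟩
  · ext i j
    change (if G.Adj j i then (if e j < e i then (1 : ℝ) else -1) else 0) =
      -(if G.Adj i j then (if e i < e j then (1 : ℝ) else -1) else 0)
    by_cases h : G.Adj i j
    · have h' : G.Adj j i := h.symm
      have hne : i ≠ j := G.ne_of_adj h
      have hene : e i ≠ e j := fun hh => hne (e.injective hh)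
      rcases lt_or_gt_of_ne hene with hlt | hgt
      · simp [h, h', hlt, not_lt.mpr hlt.le, asymm hlt]
      · simp [h, h', hgt, not_lt.mpr hgt.le, asymm hgt]
    · have h' : ¬ G.Adj j i := fun hh => h hh.symm
      simp [h, h']
  · intro i j _
    by_cases h : G.Adj i j
    · simp only [h, if_true, iff_true]
      by_cases hlt : e i < e j <;> simp [hlt]
    · simp [h]

lemma minSkewRank_mem (G : SimpleGraph V) :
    ∃ A : Matrix V V ℝ, IsSkewRep G A ∧ A.rank = minSkewRank G := by
  obtain ⟨A, hA⟩ := exists_isSkewRep G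
  have hne : {r | ∃ A : Matrix V V ℝ, IsSkewRep G A ∧ A.rank = r}.Nonempty :=
    ⟨A.rank, A, hA, rfl⟩
  exact Nat.sInf_mem hne

lemma minSkewRank_le (G : SimpleGraph V) {A : Matrix V V ℝ} (h : IsSkewRep G A) :
    minSkewRank G ≤ A.rank :=
  Nat.sInf_le ⟨A, h, rfl⟩

lemma induce_min_le (G : SimpleGraph V) (S : Set V) [Fintype S] :
    minSkewRank (G.induce S) ≤ minSkewRank G := by
  classical
  obtain ⟨A, hA, hrk⟩ := minSkewRank_mem G
  set C : Matrix S V ℝ := fun s j => if (s : V) = j then 1 else 0 with hC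
  have hsub : A.submatrix (Subtype.val : S → V) (Subtype.val : S → V) = C * A * Cᵀ := by
    ext s t
    simp only [Matrix.mul_apply, transpose_apply]
    simp [hC, Matrix.mul_apply, ite_mul, mul_ite, Finset.sum_ite_eq, Finset.sum_ite_eq']
  have hrep : IsSkewRep (G.induce S)
      (A.submatrix (Subtype.val : S → V) (Subtype.val : S → V)) := by
    constructor
    · ext i j
      have := congrFun (congrFun hA.1 (i : V)) (j : V)
      simpa using this
    · intro i j hij
      have hne : (i : V) ≠ (j : V) := Subtype.coe_injective.ne hij
      simpa using hA.2 (i : V) (j : V) hne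
  have hle : (A.submatrix (Subtype.val : S → V) (Subtype.val : S → V)).rank ≤ A.rank := by
    rw [hsub]
    exact (Matrix.rank_mul_le_left _ _).trans (Matrix.rank_mul_le_right _ _)
  exact (minSkewRank_le _ hrep).trans (hle.trans_eq hrk)

lemma min_le_induce_add_two (G : SimpleGraph V) (v : V) :
    minSkewRank G ≤ minSkewRank (G.induce {u | u ≠ v}) + 2 := by
  classical
  set S : Set V := {u | u ≠ v} with hS
  obtain ⟨B, hB, hrkB⟩ := minSkewRank_mem (G.induce S)
  set A : Matrix V V ℝ := fun i j =>
    if hi : i = v then (if G.Adj i j then -1 else 0)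
    else if hj : j = v then (if G.Adj i j then 1 else 0)
    else B ⟨i, hi⟩ ⟨j, hj⟩ with hAdef
  have hAvv : A v v = 0 := by simp [hAdef]
  have hArep : IsSkewRep G A := by
    constructor
    · ext i j
      simp only [transpose_apply, Matrix.neg_apply]
      by_cases hi : i = v <;> by_cases hj : j = v
      · simp [hi, hj, hAvv]
      · simp only [hAdef, hi, hj, dite_true, dite_false]
        by_cases h : G.Adj v j <;> simp [G.adj_comm j v, h]
      · simp only [hAdef, hi, hj, dite_true, dite_false]
        by_cases h : G.Adj i v <;> simp [G.adj_comm v i, h]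
      · simp only [hAdef, hi, hj, dite_false]
        have := congrFun (congrFun hB.1 ⟨i, hi⟩) ⟨j, hj⟩
        simpa using this
    · intro i j hij
      by_cases hi : i = v
      · simp only [hAdef, hi, dite_true]
        by_cases h : G.Adj v j <;> simp [h]
      · by_cases hj : j = v
        · simp only [hAdef, hi, hj, dite_true, dite_false]
          by_cases h : G.Adj i v <;> simp [h]
        · simp only [hAdef, hi, hj, dite_false]
          have hne : (⟨i, hi⟩ : S) ≠ ⟨j, hj⟩ := fun h => hij (congrArg Subtype.val h)
          simpa using hB.2 ⟨i, hi⟩ ⟨j, hj⟩ hne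
  -- rank decomposition
  set P : Matrix V V ℝ := fun i j => if i = v ∨ j = v then 0 else A i j with hPdef
  set w1 : V → ℝ := fun i => if i = v then 1 else 0 with hw1
  set r1 : V → ℝ := fun j => A v j with hr1
  set w2 : V → ℝ := fun i => A i v with hw2
  set r2 : V → ℝ := fun j => if j = v then 1 else 0 with hr2
  have hsplit : A = P + vecMulVec w1 r1 + vecMulVec w2 r2 := by
    ext i j
    simp only [Matrix.add_apply, Matrix.vecMulVec_apply]
    simp only [Matrix.add_apply, Matrix.vecMulVec_apply, hPdef, hw1, hr1, hw2, hr2]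
    by_cases hi : i = v <;> by_cases hj : j = v
    · simp [hi, hj, hAvv]
    · simp [hi, hj]
    · simp [hi, hj]
    · simp [hi, hj]
  set D : Matrix V S ℝ := fun i s => if i = (s : V) then 1 else 0 with hD
  set E : Matrix S V ℝ := fun s j => if (s : V) = j then 1 else 0 with hE
  have hDB : ∀ (i : V) (hi : ¬ i = v) (t : S), (D * B) i t = B ⟨i, hi⟩ t := by
    intro i hi t
    rw [Matrix.mul_apply]
    rw [Finset.sum_eq_single (⟨i, hi⟩ : S)]
    · simp [hD]
    · intro s _ hs
      have : i ≠ (s : V) := fun h => hs (Subtype.ext h.symm)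
      simp [hD, this]
    · intro h; exact absurd (Finset.mem_univ _) h
  have hDB0 : ∀ t : S, (D * B) v t = 0 := by
    intro t
    rw [Matrix.mul_apply]
    refine Finset.sum_eq_zero fun s _ => ?_
    have : v ≠ (s : V) := fun h => s.2 h.symm
    simp [hD, this]
  have hP : P = D * B * E := by
    ext i j
    by_cases hj : j = v
    · have hE0 : ∀ t : S, E t v = 0 := by
        intro t
        have ht : (t : V) ≠ v := t.2
        simp [hE, ht]
      rw [Matrix.mul_apply]
      simp [hE0, hPdef, hj]
    · by_cases hi : i = v
      · rw [Matrix.mul_apply]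
        simp [hi, hDB0, hPdef]
      · rw [Matrix.mul_apply, Finset.sum_eq_single (⟨j, hj⟩ : S)]
        · rw [hDB i hi]
          simp [hE, hPdef, hi, hj, hAdef]
        · intro t _ ht
          have : (t : V) ≠ j := fun h => ht (Subtype.ext h)
          simp [hE, this]
        · intro h; exact absurd (Finset.mem_univ _) h
  have hrkP : P.rank ≤ B.rank := by
    rw [hP]
    exact (Matrix.rank_mul_le_left _ _).trans (Matrix.rank_mul_le_right _ _)
  have hrA : A.rank ≤ B.rank + 2 := by
    calc A.rank = (P + vecMulVec w1 r1 + vecMulVec w2 r2).rank := by rw [← hsplit]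
      _ ≤ (P + vecMulVec w1 r1).rank + (vecMulVec w2 r2).rank := matrix_rank_add_le _ _
      _ ≤ (P.rank + (vecMulVec w1 r1).rank) + (vecMulVec w2 r2).rank :=
          add_le_add (matrix_rank_add_le _ _) le_rfl
      _ ≤ (B.rank + 1) + 1 :=
          add_le_add (add_le_add hrkP (_root_.rank_vecMulVec_le _ _)) (_root_.rank_vecMulVec_le _ _)
      _ = B.rank + 2 := by ring
  exact (minSkewRank_le _ hArep).trans (hrA.trans_eq (by rw [hrkB]))

end Aux

/-- The skew rank-spread `r⁻_v(G) = mr⁻(G) - mr⁻(G - v)` at any vertex is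
either `0` or `2`. -/
theorem skew_rank_spread_zero_or_two {V : Type*} [Fintype V] (G : SimpleGraph V) (v : V) :
    minSkewRank G = minSkewRank (G.induce {u | u ≠ v}) ∨
      minSkewRank G = minSkewRank (G.induce {u | u ≠ v}) + 2 := by
  have h1 := induce_min_le G {u | u ≠ v}
  have h2 := min_le_induce_add_two G v
  obtain ⟨A, hA, hrkA⟩ := minSkewRank_mem G
  obtain ⟨B, hB, hrkB⟩ := minSkewRank_mem (G.induce {u | u ≠ v})
  have heA : Even (minSkewRank G) := hrkA ▸ skew_rank_even A hA.1
  have heB : Even (minSkewRank (G.induce {u | u ≠ v})) := hrkB ▸ skew_rank_even B hB.1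
  obtain ⟨k, hk⟩ := heA
  obtain ⟨l, hl⟩ := heB
  omega
end
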